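/- For every real ν, the scaled Macdonald function ρ_ν satisfies the second-order differential equation d/dx [ x^{ν+1} · d/dx ( x^{-ν} ρ_ν(x) ) ] = ρ_ν(x) for all x > 0. -/

import Mathlib

open MeasureTheory Real Set

/-- The scaled Macdonald function `ρ_ν(x) = ∫₀^∞ t^(ν-1) e^(-t - x/t) dt`. -/
noncomputable def rho (ν : ℝ) (x : ℝ) : ℝ :=
  ∫ t in Ioi (0:ℝ), t ^ (ν - 1) * Real.exp (-t - x / t)

namespace RhoAux

open Filter

lemma contOn (μ x : ℝ) :
    ContinuousOn (fun t : ℝ => t ^ μ * Real.exp (-t - x / t)) (Ioi 0) := by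
  apply ContinuousOn.mul
  · exact fun t ht => (Real.continuousAt_rpow_const t μ (Or.inl (ne_of_gt ht))).continuousWithinAt
  · exact Real.continuous_exp.comp_continuousOn
      ((continuousOn_id.neg).sub (continuousOn_const.div continuousOn_id fun t ht => ne_of_gt ht))

lemma integrable_aux (μ : ℝ) {x : ℝ} (hx : 0 < x) :
    IntegrableOn (fun t : ℝ => t ^ μ * Real.exp (-t - x / t)) (Ioi 0) := by
  obtain ⟨n, hn⟩ : ∃ n : ℕ, -μ ≤ n := exists_nat_ge (-μ)
  have hs : (0:ℝ) < μ + n + 1 := by linarith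
  have hint : IntegrableOn
      (fun t : ℝ => ((n.factorial : ℝ) / x ^ n) * (Real.exp (-t) * t ^ (μ + n + 1 - 1))) (Ioi 0) :=
    (Real.GammaIntegral_convergent hs).const_mul _
  refine Integrable.mono' hint ((contOn μ x).aestronglyMeasurable measurableSet_Ioi) ?_
  filter_upwards [ae_restrict_mem measurableSet_Ioi] with t ht
  have ht0 : (0:ℝ) < t := ht
  have hxt : 0 < x / t := div_pos hx ht0
  have h3 : Real.exp (-(x / t)) ≤ ((n.factorial : ℝ) : ℝ) / (x / t) ^ n := by
    rw [Real.exp_neg, inv_le_comm₀ (Real.exp_pos _) (by positivity), inv_div]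
    exact Real.pow_div_factorial_le_exp _ hxt.le n
  have hsplit : Real.exp (-t - x / t) = Real.exp (-(x / t)) * Real.exp (-t) := by
    rw [← Real.exp_add]; ring_nf
  have hpow : t ^ μ * t ^ n = t ^ (μ + n + 1 - 1) := by
    rw [← Real.rpow_natCast t n, ← Real.rpow_add ht0]
    norm_num
  rw [Real.norm_of_nonneg (by positivity)]
  calc t ^ μ * Real.exp (-t - x / t)
      = t ^ μ * Real.exp (-(x / t)) * Real.exp (-t) := by rw [hsplit]; ring
    _ ≤ t ^ μ * (((n.factorial : ℝ) : ℝ) / (x / t) ^ n) * Real.exp (-t) := by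
        have h4 : t ^ μ * Real.exp (-(x / t)) ≤ t ^ μ * (((n.factorial : ℝ) : ℝ) / (x / t) ^ n) :=
          mul_le_mul_of_nonneg_left h3 (by positivity)
        exact mul_le_mul_of_nonneg_right h4 (Real.exp_pos _).le
    _ = ((n.factorial : ℝ) / x ^ n) * (Real.exp (-t) * (t ^ μ * t ^ n)) := by
        rw [div_pow, div_div_eq_mul_div]
        field_simp
    _ = ((n.factorial : ℝ) / x ^ n) * (Real.exp (-t) * t ^ (μ + n + 1 - 1)) := by rw [hpow]

lemma hasDerivAt_rho (ν : ℝ) {x : ℝ} (hx : 0 < x) :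
    HasDerivAt (rho ν) (-rho (ν - 1) x) x := by
  have hx2 : (0:ℝ) < x / 2 := half_pos hx
  have H := hasDerivAt_integral_of_dominated_loc_of_deriv_le
    (μ := volume.restrict (Ioi (0:ℝ)))
    (F := fun (y : ℝ) (t : ℝ) => t ^ (ν - 1) * Real.exp (-t - y / t))
    (F' := fun (y : ℝ) (t : ℝ) => -(t ^ (ν - 1 - 1) * Real.exp (-t - y / t)))
    (x₀ := x) (s := Metric.ball x (x / 2))
    (bound := fun t : ℝ => t ^ (ν - 1 - 1) * Real.exp (-t - (x / 2) / t))
    (Metric.ball_mem_nhds x hx2)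
    (Eventually.of_forall fun y =>
      (contOn (ν - 1) y).aestronglyMeasurable measurableSet_Ioi)
    (integrable_aux (ν - 1) hx)
    (((contOn (ν - 1 - 1) x).neg).aestronglyMeasurable measurableSet_Ioi)
    ?_ (integrable_aux (ν - 1 - 1) hx2) ?_
  · have h2 := H.2
    have : (∫ t in Ioi (0:ℝ), -(t ^ (ν - 1 - 1) * Real.exp (-t - x / t)))
        = -rho (ν - 1) x := by
      rw [integral_neg]
      have : ν - 1 - 1 = ν - 2 := by ring
      simp only [rho, this]
    rw [this] at h2
    exact h2
  · filter_upwards [ae_restrict_mem measurableSet_Ioi] with t ht y hy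
    have ht0 : (0:ℝ) < t := ht
    have hy2 : x / 2 ≤ y := by
      have := abs_lt.mp (mem_ball_iff_norm.mp hy)
      linarith [this.1]
    have hdiv : x / 2 / t ≤ y / t := by gcongr
    have hle : Real.exp (-t - y / t) ≤ Real.exp (-t - (x / 2) / t) :=
      Real.exp_le_exp.mpr (by linarith)
    rw [norm_neg, Real.norm_of_nonneg (by positivity)]
    exact mul_le_mul_of_nonneg_left hle (by positivity)
  · filter_upwards [ae_restrict_mem measurableSet_Ioi] with t ht y hy
    have ht0 : (0:ℝ) < t := ht
    have hinner : HasDerivAt (fun y : ℝ => -t - y / t) (-(1 / t)) y := by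
      simpa using ((hasDerivAt_id y).div_const t).const_sub (-t)
    have hexp : HasDerivAt (fun y : ℝ => Real.exp (-t - y / t))
        (Real.exp (-t - y / t) * -(1 / t)) y := hinner.exp
    have := hexp.const_mul (t ^ (ν - 1))
    refine this.congr_deriv ?_
    have hts : t ^ (ν - 1 - 1) = t ^ (ν - 1) / t := by
      rw [show ν - 1 - 1 = (ν - 1) - 1 by ring, Real.rpow_sub ht0, Real.rpow_one]
    rw [hts]
    field_simp

lemma rho_recurrence (ν : ℝ) {x : ℝ} (hx : 0 < x) :
    rho ν x = (ν - 1) * rho (ν - 1) x + x * rho (ν - 2) x := by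
  set G : ℝ → ℝ := fun t => if 0 < t then t ^ (ν - 1) * Real.exp (-t - x / t) else 0 with hG
  set g' : ℝ → ℝ := fun t =>
    ((ν - 1) * t ^ (ν - 2) + x * t ^ (ν - 3) - t ^ (ν - 1)) * Real.exp (-t - x / t) with hg'
  -- limit of the integrand at 0⁺
  have hlim0 : Tendsto (fun t : ℝ => t ^ (ν - 1) * Real.exp (-t - x / t)) (nhdsWithin 0 (Ioi 0))
      (nhds 0) := by
    have h1 : Tendsto (fun t : ℝ => (t⁻¹) ^ (1 - ν) * Real.exp (-(x * t⁻¹)))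
        (nhdsWithin 0 (Ioi 0)) (nhds 0) := by
      have := (tendsto_rpow_mul_exp_neg_mul_atTop_nhds_zero (1 - ν) x hx).comp
        tendsto_inv_nhdsGT_zero
      simpa [Function.comp_def] using this
    have h2 : Tendsto (fun t : ℝ => Real.exp (-t)) (nhdsWithin 0 (Ioi 0)) (nhds 1) := by
      have : Tendsto (fun t : ℝ => Real.exp (-t)) (nhds 0) (nhds 1) := by
        have := (Real.continuous_exp.comp continuous_neg).tendsto 0
        simpa [Function.comp_def] using this
      exact this.mono_left nhdsWithin_le_nhds
    have h3 := h1.mul h2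
    rw [mul_one] at h3
    apply h3.congr'
    filter_upwards [self_mem_nhdsWithin] with t ht
    have ht0 : (0:ℝ) < t := ht
    have hiv : (t⁻¹) ^ (1 - ν) = t ^ (ν - 1) := by
      rw [Real.inv_rpow ht0.le, ← Real.rpow_neg ht0.le,
        show -(1 - ν) = ν - 1 by ring]
    rw [hiv, mul_assoc, ← Real.exp_add]
    congr 2
    rw [div_eq_mul_inv]
    ring
  -- limit at ∞
  have hlimtop : Tendsto (fun t : ℝ => t ^ (ν - 1) * Real.exp (-t - x / t)) atTop (nhds 0) := by
    have h1 : Tendsto (fun t : ℝ => t ^ (ν - 1) * Real.exp (-(1 : ℝ) * t)) atTop (nhds 0) :=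
      tendsto_rpow_mul_exp_neg_mul_atTop_nhds_zero (ν - 1) 1 one_pos
    have h2 : Tendsto (fun t : ℝ => Real.exp (-(x / t))) atTop (nhds 1) := by
      have hx0 : Tendsto (fun t : ℝ => x / t) atTop (nhds 0) :=
        tendsto_const_nhds.div_atTop tendsto_id
      have hx1 : Tendsto (fun t : ℝ => -(x / t)) atTop (nhds 0) := by
        simpa using hx0.neg
      have := (Real.continuous_exp.tendsto 0).comp hx1
      simpa [Function.comp_def] using this
    have h3 := h1.mul h2
    rw [mul_one] at h3
    apply h3.congr
    intro t
    rw [mul_assoc, ← Real.exp_add]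
    congr 2
    ring
  have hG0 : Tendsto G (nhdsWithin 0 (Ioi 0)) (nhds 0) := by
    apply hlim0.congr'
    filter_upwards [self_mem_nhdsWithin] with t ht
    simp [hG, show (0:ℝ) < t from ht]
  have hcont : ContinuousWithinAt G (Ici 0) 0 := by
    have hins : Ici (0:ℝ) = insert 0 (Ioi 0) := by
      rw [Ioi_insert]
    unfold ContinuousWithinAt
    rw [hins, nhdsWithin_insert, tendsto_sup]
    constructor
    · have hg0 : G 0 = 0 := by simp [hG]
      simpa [hg0] using tendsto_pure_nhds G 0
    · have hg0 : G 0 = 0 := by simp [hG]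
      rw [hg0]
      exact hG0
  have hderiv : ∀ t ∈ Ioi (0:ℝ), HasDerivAt G (g' t) t := by
    intro t ht
    have ht0 : (0:ℝ) < t := ht
    have hEq : (fun s : ℝ => s ^ (ν - 1) * Real.exp (-s - x / s)) =ᶠ[nhds t] G := by
      filter_upwards [Ioi_mem_nhds ht0] with s hs
      simp [hG, show (0:ℝ) < s from hs]
    have hpow : HasDerivAt (fun s : ℝ => s ^ (ν - 1)) ((ν - 1) * t ^ (ν - 1 - 1)) t :=
      Real.hasDerivAt_rpow_const (Or.inl ht0.ne')
    have hdiv : HasDerivAt (fun s : ℝ => x / s) (x * -(t ^ 2)⁻¹) t := by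
      have := (hasDerivAt_inv ht0.ne').const_mul x
      simpa [div_eq_mul_inv] using this
    have hinner : HasDerivAt (fun s : ℝ => -s - x / s) (-1 - x * -(t ^ 2)⁻¹) t :=
      ((hasDerivAt_id t).neg).sub hdiv
    have hexp : HasDerivAt (fun s : ℝ => Real.exp (-s - x / s))
        (Real.exp (-t - x / t) * (-1 - x * -(t ^ 2)⁻¹)) t := hinner.exp
    have hmul := hpow.mul hexp
    have : HasDerivAt (fun s : ℝ => s ^ (ν - 1) * Real.exp (-s - x / s)) (g' t) t := by
      refine hmul.congr_deriv ?_
      symm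
      have e1 : t ^ (ν - 1 - 1) = t ^ (ν - 2) := by
        rw [show ν - 1 - 1 = ν - 2 by ring]
      have e2 : t ^ (ν - 2) = t ^ (ν - 3) * t := by
        rw [show ν - 2 = (ν - 3) + 1 by ring, Real.rpow_add ht0, Real.rpow_one]
      have e3 : t ^ (ν - 1) = t ^ (ν - 3) * t ^ 2 := by
        rw [show ν - 1 = (ν - 3) + 1 + 1 by ring, Real.rpow_add ht0, Real.rpow_add ht0,
          Real.rpow_one]
        ring
      have h4 : (t ^ 2 : ℝ) * (t ^ 2)⁻¹ = 1 := mul_inv_cancel₀ (by positivity)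
      simp only [hg']
      linear_combination (-(ν - 1) * Real.exp (-t - x / t)) * e1
        + (-(x * Real.exp (-t - x / t) * (t ^ 2)⁻¹)) * e3
        + (-(x * Real.exp (-t - x / t) * t ^ (ν - 3))) * h4
    exact this.congr_of_eventuallyEq hEq.symm
  have hint : IntegrableOn g' (Ioi 0) := by
    have h1 := (integrable_aux (ν - 2) hx).const_mul (ν - 1)
    have h2 := (integrable_aux (ν - 3) hx).const_mul x
    have h3 := integrable_aux (ν - 1) hx
    have h := (h1.add h2).sub h3
    apply h.congr
    filter_upwards with t
    simp only [hg', Pi.add_apply, Pi.sub_apply]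
    ring
  have hGtop : Tendsto G atTop (nhds 0) := by
    apply hlimtop.congr'
    filter_upwards [eventually_gt_atTop (0:ℝ)] with t ht
    simp [hG, ht]
  have hFTC := MeasureTheory.integral_Ioi_of_hasDerivAt_of_tendsto hcont hderiv hint hGtop
  have hGzero : G 0 = 0 := by simp [hG]
  rw [hGzero, sub_zero] at hFTC
  -- now expand the integral of g'
  have hsplit : (∫ t in Ioi (0:ℝ), g' t)
      = (ν - 1) * rho (ν - 1) x + x * rho (ν - 2) x - rho ν x := by
    have e1 : ∀ t : ℝ, g' t
        = (ν - 1) * (t ^ (ν - 2) * Real.exp (-t - x / t))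
          + x * (t ^ (ν - 3) * Real.exp (-t - x / t))
          - t ^ (ν - 1) * Real.exp (-t - x / t) := by
      intro t; simp only [hg']; ring
    rw [integral_congr_ae (Eventually.of_forall fun t => e1 t)]
    have hsum : Integrable (fun t : ℝ => (ν - 1) * (t ^ (ν - 2) * Real.exp (-t - x / t))
        + x * (t ^ (ν - 3) * Real.exp (-t - x / t))) (volume.restrict (Ioi 0)) := by
      exact ((integrable_aux (ν - 2) hx).const_mul (ν - 1)).add
        ((integrable_aux (ν - 3) hx).const_mul x)
    have hone : Integrable (fun t : ℝ => (ν - 1) * (t ^ (ν - 2) * Real.exp (-t - x / t)))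
        (volume.restrict (Ioi 0)) := by
      exact (integrable_aux (ν - 2) hx).const_mul (ν - 1)
    have htwo : Integrable (fun t : ℝ => x * (t ^ (ν - 3) * Real.exp (-t - x / t)))
        (volume.restrict (Ioi 0)) := by
      exact (integrable_aux (ν - 3) hx).const_mul x
    rw [integral_sub hsum (integrable_aux (ν - 1) hx)]
    rw [integral_add hone htwo]
    rw [integral_const_mul, integral_const_mul]
    have r1 : rho (ν - 1) x = ∫ t in Ioi (0:ℝ), t ^ (ν - 2) * Real.exp (-t - x / t) := by
      simp only [rho, show ν - 1 - 1 = ν - 2 by ring]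
    have r2 : rho (ν - 2) x = ∫ t in Ioi (0:ℝ), t ^ (ν - 3) * Real.exp (-t - x / t) := by
      simp only [rho, show ν - 2 - 1 = ν - 3 by ring]
    have r3 : rho ν x = ∫ t in Ioi (0:ℝ), t ^ (ν - 1) * Real.exp (-t - x / t) := rfl
    rw [r1, r2, r3]
  rw [hsplit] at hFTC
  linarith

end RhoAux

theorem rho_ode (ν : ℝ) (x : ℝ) (hx : 0 < x) :
    deriv (fun y : ℝ => y ^ (ν + 1) * deriv (fun z : ℝ => z ^ (-ν) * rho ν z) y) x
      = rho ν x := by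
  have key : ∀ y ∈ Ioi (0:ℝ), y ^ (ν + 1) * deriv (fun z : ℝ => z ^ (-ν) * rho ν z) y
      = -ν * rho ν y - y * rho (ν - 1) y := by
    intro y hy
    have hy0 : (0:ℝ) < y := hy
    have hd : HasDerivAt (fun z : ℝ => z ^ (-ν) * rho ν z)
        ((-ν) * y ^ (-ν - 1) * rho ν y + y ^ (-ν) * (-rho (ν - 1) y)) y :=
      (Real.hasDerivAt_rpow_const (Or.inl hy0.ne')).mul (RhoAux.hasDerivAt_rho ν hy0)
    rw [hd.deriv]
    have h1 : y ^ (ν + 1) * y ^ (-ν - 1) = 1 := by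
      rw [← Real.rpow_add hy0]
      norm_num
    have h2 : y ^ (ν + 1) * y ^ (-ν) = y := by
      rw [← Real.rpow_add hy0]
      norm_num
    calc y ^ (ν + 1) * ((-ν) * y ^ (-ν - 1) * rho ν y + y ^ (-ν) * (-rho (ν - 1) y))
        = (-ν) * (y ^ (ν + 1) * y ^ (-ν - 1)) * rho ν y
          + (y ^ (ν + 1) * y ^ (-ν)) * (-rho (ν - 1) y) := by ring
      _ = -ν * rho ν y - y * rho (ν - 1) y := by rw [h1, h2]; ring
  have hev : (fun y : ℝ => y ^ (ν + 1) * deriv (fun z : ℝ => z ^ (-ν) * rho ν z) y)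
      =ᶠ[nhds x] fun y => -ν * rho ν y - y * rho (ν - 1) y := by
    filter_upwards [Ioi_mem_nhds hx] with y hy using key y hy
  rw [hev.deriv_eq]
  have hd2 : HasDerivAt (fun y : ℝ => -ν * rho ν y - y * rho (ν - 1) y)
      (-ν * (-rho (ν - 1) x) - (1 * rho (ν - 1) x + x * (-rho (ν - 1 - 1) x))) x :=
    ((RhoAux.hasDerivAt_rho ν hx).const_mul (-ν)).sub
      ((hasDerivAt_id x).mul (RhoAux.hasDerivAt_rho (ν - 1) hx))
  rw [hd2.deriv]
  have hexp : ν - 1 - 1 = ν - 2 := by ring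
  rw [hexp]
  have := RhoAux.rho_recurrence ν hx
  linarith
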